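/- Let $H, C \in \mathbb{R}^{n \times n}$ with $C \geq 0$, $C_{ii} = 0$, $C_{ij} > 0$ for $i \neq j$, let $x \geq 0$ with $x \neq 0$, $\gamma > 0$, and $\delta > 0$. Define the smooth dual $g(\lambda) = -\lambda\delta + \gamma \sum_{i: x_i > 0} x_i \log x_i - \gamma \sum_i x_i \log \sum_j \exp(-(H_{ij} + \lambda C_{ij})/\gamma)$. Its derivative satisfies $g'(\lambda) \leq -\delta + \sum_{i} \sum_{j \neq i} x_i \exp\!\big(-(H_{ij} + \lambda C_{ij} - H_{ii})/\gamma\big) C_{ij}$ for every $\lambda \geq 0$. -/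

import Mathlib

open Finset

/-- The smooth (entropically regularized) dual objective
`g(λ) = -λδ + γ ∑_{i : x i > 0} x i log x i
        - γ ∑ i x i log ∑ j exp(-(H i j + λ C i j)/γ)`. -/
noncomputable def smoothDual {n : ℕ} (H C : Matrix (Fin n) (Fin n) ℝ)
    (x : Fin n → ℝ) (δ γ : ℝ) (lam : ℝ) : ℝ :=
  -(lam * δ) + γ * ∑ i ∈ Finset.univ.filter (fun i => 0 < x i), x i * Real.log (x i)
    - γ * ∑ i, x i * Real.log (∑ j, Real.exp (-(H i j + lam * C i j) / γ))

/-- derivative bound for the smooth dual: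
`g'(λ) ≤ -δ + ∑ i ∑_{j ≠ i} x i exp(-(H i j + λ C i j - H i i)/γ) C i j`. -/
theorem stmt_12 {n : ℕ} (H C : Matrix (Fin n) (Fin n) ℝ)
    (hC0 : ∀ i j, 0 ≤ C i j) (hCd : ∀ i, C i i = 0)
    (hCo : ∀ i j : Fin n, i ≠ j → 0 < C i j)
    (x : Fin n → ℝ) (hx : ∀ i, 0 ≤ x i) (hxne : x ≠ 0)
    (γ : ℝ) (hγ : 0 < γ) (δ : ℝ) (hδ : 0 < δ) (lam : ℝ) (hlam : 0 ≤ lam) :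
    deriv (smoothDual H C x δ γ) lam
      ≤ -δ + ∑ i, ∑ j ∈ Finset.univ.erase i,
          x i * Real.exp (-(H i j + lam * C i j - H i i) / γ) * C i j := by
  classical
  have hγ' : γ ≠ 0 := ne_of_gt hγ
  have hSpos : ∀ (i : Fin n) (l : ℝ),
      0 < ∑ j, Real.exp (-(H i j + l * C i j) / γ) :=
    fun i l => Finset.sum_pos (fun j _ => Real.exp_pos _) ⟨i, Finset.mem_univ i⟩
  -- derivative of each log-sum-exp term
  have h2 : ∀ i : Fin n, HasDerivAt
      (fun l => Real.log (∑ j, Real.exp (-(H i j + l * C i j) / γ)))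
      ((∑ j, Real.exp (-(H i j + lam * C i j) / γ) * (-C i j / γ)) /
        (∑ j, Real.exp (-(H i j + lam * C i j) / γ))) lam := by
    intro i
    have hs : HasDerivAt (fun l => ∑ j, Real.exp (-(H i j + l * C i j) / γ))
        (∑ j, Real.exp (-(H i j + lam * C i j) / γ) * (-C i j / γ)) lam := by
      apply HasDerivAt.fun_sum
      intro j _
      have hlin : HasDerivAt (fun l : ℝ => -(H i j + l * C i j) / γ) (-C i j / γ) lam := by
        have := ((((hasDerivAt_id lam).mul_const (C i j)).const_add (H i j)).neg).div_const γ
        simpa using this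
      exact hlin.exp
    exact hs.log (ne_of_gt (hSpos i lam))
  have h3 : HasDerivAt
      (fun l => ∑ i, x i * Real.log (∑ j, Real.exp (-(H i j + l * C i j) / γ)))
      (∑ i, x i * ((∑ j, Real.exp (-(H i j + lam * C i j) / γ) * (-C i j / γ)) /
        (∑ j, Real.exp (-(H i j + lam * C i j) / γ)))) lam :=
    HasDerivAt.fun_sum (fun i _ => (h2 i).const_mul (x i))
  have h1 : HasDerivAt (fun l : ℝ => -(l * δ)) (-δ) lam := by
    have := ((hasDerivAt_id lam).mul_const δ).fun_neg
    simpa using this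
  have h4 := (h1.add_const
      (γ * ∑ i ∈ Finset.univ.filter (fun i => 0 < x i), x i * Real.log (x i))).sub
    (h3.const_mul γ)
  have hder : HasDerivAt (smoothDual H C x δ γ)
      (-δ - γ * ∑ i, x i * ((∑ j, Real.exp (-(H i j + lam * C i j) / γ) * (-C i j / γ)) /
        (∑ j, Real.exp (-(H i j + lam * C i j) / γ)))) lam := h4
  rw [hder.deriv]
  have hnum : ∀ i : Fin n, (∑ j, Real.exp (-(H i j + lam * C i j) / γ) * (-C i j / γ))
      = -((∑ j, Real.exp (-(H i j + lam * C i j) / γ) * C i j) / γ) := by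
    intro i
    calc (∑ j, Real.exp (-(H i j + lam * C i j) / γ) * (-C i j / γ))
        = ∑ j, -(Real.exp (-(H i j + lam * C i j) / γ) * C i j) / γ :=
          Finset.sum_congr rfl (fun j _ => by ring)
      _ = (∑ j, -(Real.exp (-(H i j + lam * C i j) / γ) * C i j)) / γ :=
          (Finset.sum_div _ _ _).symm
      _ = (-(∑ j, Real.exp (-(H i j + lam * C i j) / γ) * C i j)) / γ := by
          rw [Finset.sum_neg_distrib]
      _ = -((∑ j, Real.exp (-(H i j + lam * C i j) / γ) * C i j) / γ) := neg_div _ _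
  -- rewrite the derivative in the nice form
  have hrw : -δ - γ * ∑ i, x i * ((∑ j, Real.exp (-(H i j + lam * C i j) / γ) * (-C i j / γ)) /
        (∑ j, Real.exp (-(H i j + lam * C i j) / γ)))
      = -δ + ∑ i, x i * ((∑ j, Real.exp (-(H i j + lam * C i j) / γ) * C i j) /
        (∑ j, Real.exp (-(H i j + lam * C i j) / γ))) := by
    rw [sub_eq_add_neg]
    congr 1
    rw [Finset.mul_sum, ← Finset.sum_neg_distrib]
    apply Finset.sum_congr rfl
    intro i _
    rw [hnum i]
    have hS := ne_of_gt (hSpos i lam)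
    have key : ∀ N S : ℝ, S ≠ 0 →
        -(γ * (x i * (-(N / γ) / S))) = x i * (N / S) := by
      intro N S hS0
      field_simp
    exact key _ _ hS
  rw [hrw]
  apply add_le_add_right
  apply Finset.sum_le_sum
  intro i _
  -- per-i bound
  set e : ℝ := Real.exp (H i i / γ) with he
  have hepos : 0 < e := Real.exp_pos _
  set N : ℝ := ∑ j, Real.exp (-(H i j + lam * C i j) / γ) * C i j with hN
  set S : ℝ := ∑ j, Real.exp (-(H i j + lam * C i j) / γ) with hSdef
  have hSp : 0 < S := hSpos i lam
  have hNnn : 0 ≤ N :=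
    Finset.sum_nonneg fun j _ => mul_nonneg (Real.exp_pos _).le (hC0 i j)
  have hE : ∀ j, Real.exp (-(H i j + lam * C i j - H i i) / γ)
      = Real.exp (-(H i j + lam * C i j) / γ) * e := by
    intro j
    rw [he, ← Real.exp_add]
    congr 1
    field_simp
    ring
  have hS' : (∑ j, Real.exp (-(H i j + lam * C i j - H i i) / γ)) = S * e := by
    rw [hSdef, Finset.sum_mul]
    exact Finset.sum_congr rfl fun j _ => hE j
  have hS'1 : 1 ≤ S * e := by
    rw [← hS']
    have h1le : Real.exp (-(H i i + lam * C i i - H i i) / γ) = 1 := by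
      rw [hCd i]; simp
    calc (1:ℝ) = Real.exp (-(H i i + lam * C i i - H i i) / γ) := h1le.symm
      _ ≤ ∑ j, Real.exp (-(H i j + lam * C i j - H i i) / γ) :=
        Finset.single_le_sum (f := fun j => Real.exp (-(H i j + lam * C i j - H i i) / γ))
          (fun j _ => (Real.exp_pos _).le) (Finset.mem_univ i)
  have hRHS : (∑ j ∈ Finset.univ.erase i,
      x i * Real.exp (-(H i j + lam * C i j - H i i) / γ) * C i j) = x i * (N * e) := by
    have herase := Finset.sum_erase (f := fun j =>
        x i * Real.exp (-(H i j + lam * C i j - H i i) / γ) * C i j)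
      (Finset.univ) (a := i) (by simp [hCd i])
    rw [herase, hN, Finset.sum_mul, Finset.mul_sum]
    apply Finset.sum_congr rfl
    intro j _
    simp only [hE j]; ring
  rw [hRHS]
  apply mul_le_mul_of_nonneg_left _ (hx i)
  rw [div_le_iff₀ hSp]
  calc N ≤ N * (S * e) := le_mul_of_one_le_right hNnn hS'1
    _ = N * e * S := by ring
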